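/- Fix integers n ≥ 1 and even m ≥ 2, set N = m·n, and let g_A, g_B, X be the permutations of ℤ/Nℤ defined in the context. Then the following Cayley distances hold: d(g_A,e) = d(g_B,e) = n·(m−1); d(g_A,g_B) = 2·(n−1); d(X,e) = n·(m−2); and d(X,g_A) = d(X,g_B) = n. -/

import Mathlib

noncomputable def cycleCount {α : Type*} (g : Equiv.Perm α) : ℕ :=
  Nat.card (Quotient (Setoid.mk g.SameCycle
    ⟨fun x => Equiv.Perm.SameCycle.refl g x,
     fun h => h.symm,
     fun h₁ h₂ => h₁.trans h₂⟩))

/-- The Cayley distance `d(g,h) = N - #(g h⁻¹)` on the permutations of a finite set. -/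
noncomputable def cayley {α : Type*} (g h : Equiv.Perm α) : ℕ :=
  Nat.card α - cycleCount (g * h⁻¹)

def scSetoid {α : Type*} (g : Equiv.Perm α) : Setoid α :=
  Setoid.mk g.SameCycle
    ⟨fun x => Equiv.Perm.SameCycle.refl g x,
     fun h => h.symm,
     fun h₁ h₂ => h₁.trans h₂⟩

lemma cycleCount_def {α : Type*} (g : Equiv.Perm α) :
    cycleCount g = Nat.card (Quotient (scSetoid g)) := rfl

lemma cycleCount_eq_card {α β : Type*} (g : Equiv.Perm α) (c : α → β)
    (h1 : ∀ x, c (g x) = c x)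
    (h2 : ∀ x y, c x = c y → g.SameCycle x y)
    (h3 : Function.Surjective c) :
    cycleCount g = Nat.card β := by
  have hnat : ∀ (k : ℕ) (x : α), c ((g ^ k) x) = c x := by
    intro k
    induction k with
    | zero => intro x; simp
    | succ k ih =>
      intro x
      rw [pow_succ, Equiv.Perm.mul_apply]
      rw [ih (g x), h1]
  have hz : ∀ (i : ℤ) (x : α), c ((g ^ i) x) = c x := by
    intro i x
    rcases Int.eq_nat_or_neg i with ⟨k, rfl | rfl⟩
    · rw [zpow_natCast]; exact hnat k x
    · rw [zpow_neg, zpow_natCast]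
      have := hnat k ((g ^ k)⁻¹ x)
      rw [show ∀ y, (g ^ k) ((g ^ k)⁻¹ y) = y from (g ^ k).apply_symm_apply] at this
      exact this.symm
  have hsound : ∀ x y : α, g.SameCycle x y → c x = c y := by
    rintro x y ⟨i, rfl⟩
    exact (hz i x).symm
  rw [cycleCount_def]
  apply Nat.card_eq_of_bijective (Quotient.lift c (fun x y (h : g.SameCycle x y) => hsound x y h))
  constructor
  · intro a b
    induction a using Quotient.inductionOn with
    | h x =>
      induction b using Quotient.inductionOn with
      | h y =>
        intro hxy
        exact Quotient.sound (h2 x y hxy)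
  · intro b
    obtain ⟨x, rfl⟩ := h3 b
    exact ⟨Quotient.mk _ x, rfl⟩

lemma cycleCount_conj {α : Type*} (t g : Equiv.Perm α) :
    cycleCount (t * g * t⁻¹) = cycleCount g := by
  apply cycleCount_eq_card (t * g * t⁻¹)
    (fun x => (Quotient.mk (scSetoid g) (t⁻¹ x)))
  · intro x
    apply Quotient.sound
    show g.SameCycle _ _
    have : t⁻¹ ((t * g * t⁻¹) x) = g (t⁻¹ x) := by
      simp [Equiv.Perm.mul_apply]
    rw [this]
    exact Equiv.Perm.SameCycle.symm (⟨1, by simp⟩ : g.SameCycle (t⁻¹ x) (g (t⁻¹ x)))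
  · intro x y hxy
    obtain ⟨i, hi⟩ := Quotient.exact hxy
    refine ⟨i, ?_⟩
    have hc : (t * g * t⁻¹) ^ i = t * g ^ i * t⁻¹ := by
      have h1 : t * g * t⁻¹ = MulAut.conj t g := rfl
      rw [h1, ← map_zpow]
      rfl
    rw [hc]
    simp only [Equiv.Perm.mul_apply]
    rw [hi]
    simp
  · intro q
    induction q using Quotient.inductionOn with
    | h y => exact ⟨t y, by simp⟩


lemma divmod_helper (d t u : ℕ) (hd : 0 < d) (hu : u < d) :
    (t * d + u) / d = t ∧ (t * d + u) % d = u := by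
  constructor
  · rw [add_comm, mul_comm, Nat.add_mul_div_left _ _ hd, Nat.div_eq_of_lt hu, Nat.zero_add]
  · rw [add_comm, mul_comm, Nat.add_mul_mod_self_left, Nat.mod_eq_of_lt hu]

lemma cycleCount_blocks (N d k : ℕ) (hdk : d * k = N) (hd : 1 ≤ d) (hk : 1 ≤ k)
    [NeZero N]
    (g : Equiv.Perm (ZMod N))
    (hg : ∀ q r : ℕ, r < d →
      g ((q * d + r : ℕ) : ZMod N) = ((q * d + (r + 1) % d : ℕ) : ZMod N)) :
    cycleCount g = k := by
  have hd0 : 0 < d := hd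
  -- decomposition of any element
  have hdec : ∀ x : ZMod N, x = ((x.val / d * d + x.val % d : ℕ) : ZMod N) := by
    intro x
    rw [Nat.div_add_mod']
    exact (ZMod.natCast_rightInverse x).symm
  have hqlt : ∀ x : ZMod N, x.val / d < k := by
    intro x
    have hv : x.val < N := ZMod.val_lt x
    have : x.val < d * k := by rw [hdk]; exact hv
    exact Nat.div_lt_of_lt_mul this
  have hvlt : ∀ q u : ℕ, q < k → u < d → q * d + u < N := by
    intro q u hq hu
    calc q * d + u < q * d + d := by omega
    _ = (q + 1) * d := by ring
    _ ≤ k * d := Nat.mul_le_mul_right d hq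
    _ = N := by rw [mul_comm]; exact hdk
  -- iterate formula
  have hpow : ∀ (j q r : ℕ), r < d →
      (g ^ j) ((q * d + r : ℕ) : ZMod N) = ((q * d + (r + j) % d : ℕ) : ZMod N) := by
    intro j
    induction j with
    | zero => intro q r hr; simp [Nat.mod_eq_of_lt hr]
    | succ j ih =>
      intro q r hr
      rw [pow_succ', Equiv.Perm.mul_apply, ih q r hr, hg q ((r + j) % d) (Nat.mod_lt _ hd0)]
      congr 2
      rw [Nat.mod_add_mod, Nat.add_assoc]
  have hbase0 : ∀ q r : ℕ, r < d →
      g.SameCycle ((q * d + r : ℕ) : ZMod N) ((q * d : ℕ) : ZMod N) := by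
    intro q r hr
    refine ⟨((d - r : ℕ) : ℤ), ?_⟩
    rw [zpow_natCast, hpow (d - r) q r hr]
    congr 1
    have h0 : (r + (d - r)) % d = 0 := by
      have : r + (d - r) = d := by omega
      rw [this, Nat.mod_self]
    rw [h0, Nat.add_zero]
  have hbase : ∀ x : ZMod N, g.SameCycle x ((x.val / d * d : ℕ) : ZMod N) := by
    intro x
    have hr : x.val % d < d := Nat.mod_lt _ hd0
    have := hbase0 (x.val / d) (x.val % d) hr
    rwa [← hdec x] at this
  apply Eq.trans (cycleCount_eq_card g (fun x => (⟨x.val / d, hqlt x⟩ : Fin k)) ?_ ?_ ?_)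
  · simp
  · -- invariance
    intro x
    have hr : x.val % d < d := Nat.mod_lt _ hd0
    apply Fin.ext
    show (g x).val / d = x.val / d
    conv_lhs => rw [hdec x]
    rw [hg (x.val / d) (x.val % d) hr]
    have hlt : x.val / d * d + (x.val % d + 1) % d < N :=
      hvlt _ _ (hqlt x) (Nat.mod_lt _ hd0)
    rw [ZMod.val_cast_of_lt hlt]
    exact (divmod_helper d (x.val / d) _ hd0 (Nat.mod_lt _ hd0)).1
  · -- same label → same cycle
    intro x y hxy
    have hq : x.val / d = y.val / d := congrArg Fin.val hxy
    refine (hbase x).trans ?_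
    rw [hq]
    exact (hbase y).symm
  · -- surjective
    intro q
    refine ⟨((q.val * d : ℕ) : ZMod N), ?_⟩
    apply Fin.ext
    show (((q.val * d : ℕ) : ZMod N)).val / d = q.val
    have hlt : q.val * d + 0 < N := hvlt q.val 0 q.isLt hd0
    rw [Nat.add_zero] at hlt
    rw [ZMod.val_cast_of_lt hlt]
    have := (divmod_helper d q.val 0 hd0 hd0).1
    rw [Nat.add_zero] at this
    exact this

lemma mdvd (m n : ℕ) : m ∣ m * n := Dvd.intro n rfl

lemma val_cast_mod (m n : ℕ) [NeZero (m * n)] (a : ℕ) :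
    ((a : ZMod (m * n)).val) % m = a % m := by
  rw [ZMod.val_natCast, Nat.mod_mod_of_dvd _ (mdvd m n)]

lemma val_add_cast_mod (m n : ℕ) [NeZero (m * n)] (x : ZMod (m * n)) (a : ℕ) :
    (x + (a : ZMod (m * n))).val % m = (x.val + a) % m := by
  rw [ZMod.val_add, ZMod.val_natCast, Nat.mod_mod_of_dvd _ (mdvd m n),
    Nat.add_mod, Nat.mod_mod_of_dvd _ (mdvd m n), ← Nat.add_mod]

lemma reach (m n s : ℕ) [NeZero (m * n)]
    (g : Equiv.Perm (ZMod (m * n)))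
    (hg : ∀ z : ZMod (m * n), z.val % m = s → g z = z + ((m : ℕ) : ZMod (m * n))) :
    ∀ x y : ZMod (m * n), x.val % m = s → y.val % m = s → ∃ j : ℕ, (g ^ j) x = y := by
  have hpow : ∀ (j : ℕ) (x : ZMod (m * n)), x.val % m = s →
      (g ^ j) x = x + ((j * m : ℕ) : ZMod (m * n)) := by
    intro j
    induction j with
    | zero => intro x _; simp
    | succ j ih =>
      intro x hx
      rw [pow_succ, Equiv.Perm.mul_apply, hg x hx]
      have hres : (x + ((m : ℕ) : ZMod (m * n))).val % m = s := by
        rw [val_add_cast_mod, Nat.add_mod, Nat.mod_self, Nat.add_zero,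
          Nat.mod_mod_of_dvd _ (dvd_refl m), hx]
      rw [ih _ hres]
      push_cast
      ring
  intro x y hx hy
  obtain ⟨a, ha, hxv⟩ : ∃ a, a < n ∧ x.val = a * m + s :=
    ⟨x.val / m, Nat.div_lt_of_lt_mul (ZMod.val_lt x), by
      have := Nat.div_add_mod' x.val m; rw [hx] at this; omega⟩
  obtain ⟨b, hb, hyv⟩ : ∃ b, b < n ∧ y.val = b * m + s :=
    ⟨y.val / m, Nat.div_lt_of_lt_mul (ZMod.val_lt y), by
      have := Nat.div_add_mod' y.val m; rw [hy] at this; omega⟩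
  refine ⟨n + b - a, ?_⟩
  rw [hpow _ x hx]
  have key : x.val + (n + b - a) * m = n * m + y.val := by
    have e1 : a + (n + b - a) = n + b := by omega
    calc x.val + (n + b - a) * m = a * m + s + (n + b - a) * m := by rw [hxv]
    _ = (a + (n + b - a)) * m + s := by ring
    _ = (n + b) * m + s := by rw [e1]
    _ = n * m + (b * m + s) := by ring
    _ = n * m + y.val := by rw [hyv]
  have hnm0 : ((n * m : ℕ) : ZMod (m * n)) = 0 := by
    rw [mul_comm]
    exact ZMod.natCast_self _
  calc x + ((n + b - a) * m : ℕ) = ((x.val : ℕ) : ZMod (m * n)) + ((n + b - a) * m : ℕ) := by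
        rw [ZMod.natCast_rightInverse x]
  _ = ((x.val + (n + b - a) * m : ℕ) : ZMod (m * n)) := by push_cast; ring
  _ = ((n * m + y.val : ℕ) : ZMod (m * n)) := by rw [key]
  _ = y := by push_cast [hnm0]; rw [ZMod.natCast_rightInverse y]; ring

lemma cycleCount_pairs (m n c0 : ℕ) [NeZero (m * n)]
    (hc0 : c0 ≠ 0)
    (h : Equiv.Perm (ZMod (m * n)))
    (A : ∀ x : ZMod (m * n), x.val % m = 0 → (h x).val % m = c0)
    (B : ∀ x : ZMod (m * n), x.val % m = c0 → (h x).val % m = 0)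
    (C : ∀ x : ZMod (m * n), x.val % m = 0 → h (h x) = x)
    (D : ∀ x : ZMod (m * n), x.val % m ≠ 0 → x.val % m ≠ c0 → h x = x) :
    cycleCount h = Nat.card {y : ZMod (m * n) // y.val % m ≠ c0} := by
  classical
  apply cycleCount_eq_card h (fun x =>
    if hx : x.val % m = c0 then
      (⟨h x, by rw [B x hx]; exact fun e => hc0 e.symm⟩ : {y : ZMod (m * n) // y.val % m ≠ c0})
    else ⟨x, hx⟩)
  · intro x
    by_cases hx0 : x.val % m = 0
    · have hA := A x hx0
      have hxne : ¬ x.val % m = c0 := by rw [hx0]; exact fun e => hc0 e.symm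
      simp only [dif_pos hA, dif_neg hxne]
      exact Subtype.ext (C x hx0)
    · by_cases hxc : x.val % m = c0
      · have hB := B x hxc
        have hne : ¬ (h x).val % m = c0 := by rw [hB]; exact fun e => hc0 e.symm
        simp only [dif_neg hne, dif_pos hxc]
      · simp only [D x hx0 hxc]
  · intro x y hxy
    by_cases hx : x.val % m = c0 <;> by_cases hy : y.val % m = c0
    · simp only [dif_pos hx, dif_pos hy] at hxy
      have e : h x = h y := congrArg Subtype.val hxy
      rw [h.injective e]
    · simp only [dif_pos hx, dif_neg hy] at hxy
      have e : h x = y := congrArg Subtype.val hxy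
      exact ⟨1, by simpa using e⟩
    · simp only [dif_neg hx, dif_pos hy] at hxy
      have e : x = h y := congrArg Subtype.val hxy
      exact Equiv.Perm.SameCycle.symm ⟨1, by simpa using e.symm⟩
    · simp only [dif_neg hx, dif_neg hy] at hxy
      have e : x = y := congrArg Subtype.val hxy
      rw [e]
  · rintro ⟨y, hy⟩
    refine ⟨y, ?_⟩
    simp only [dif_neg hy]

lemma cycleCount_twocycles (m n c0 : ℕ) [NeZero (m * n)]
    (hc0 : c0 ≠ 0) (hc0m : c0 < m) (hn : 0 < n)
    (f : Equiv.Perm (ZMod (m * n)))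
    (A : ∀ x : ZMod (m * n), x.val % m = 0 → f x = x + ((m : ℕ) : ZMod (m * n)))
    (B : ∀ x : ZMod (m * n), x.val % m = c0 → f x = x + ((m * n - m : ℕ) : ZMod (m * n)))
    (D : ∀ x : ZMod (m * n), x.val % m ≠ 0 → x.val % m ≠ c0 → f x = x) :
    cycleCount f =
      Nat.card ({y : ZMod (m * n) // y.val % m ≠ 0 ∧ y.val % m ≠ c0} ⊕ Bool) := by
  classical
  have hm0 : 0 < m := by omega
  have hmmn : m ≤ m * n := Nat.le_mul_of_pos_right m hn
  have hres0 : ∀ x : ZMod (m * n), (x + ((m : ℕ) : ZMod (m * n))).val % m = x.val % m := by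
    intro x
    rw [val_add_cast_mod, Nat.add_mod_right]
  have hresc : ∀ x : ZMod (m * n),
      (x + ((m * n - m : ℕ) : ZMod (m * n))).val % m = x.val % m := by
    intro x
    have e : m * n - m = m * (n - 1) := by rw [Nat.mul_sub]; simp
    rw [val_add_cast_mod, e, Nat.add_mul_mod_self_left]
  have hcastsum : ((m : ℕ) : ZMod (m * n)) + ((m * n - m : ℕ) : ZMod (m * n)) = 0 := by
    have e : ((m + (m * n - m) : ℕ) : ZMod (m * n)) = 0 := by
      rw [Nat.add_sub_cancel' hmmn]
      exact ZMod.natCast_self _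
    rw [← e]
    push_cast
    ring
  have hinv : ∀ z : ZMod (m * n), z.val % m = c0 →
      f⁻¹ z = z + ((m : ℕ) : ZMod (m * n)) := by
    intro z hz
    have hz' : (z + ((m : ℕ) : ZMod (m * n))).val % m = c0 := by rw [hres0]; exact hz
    have e : f (z + ((m : ℕ) : ZMod (m * n))) = z := by
      rw [B _ hz', add_assoc, hcastsum, add_zero]
    apply f.injective
    rw [show f (f⁻¹ z) = z from f.apply_symm_apply z, e]
  apply cycleCount_eq_card f (fun x =>
    if hx0 : x.val % m = 0 then Sum.inr true
    else if hxc : x.val % m = c0 then Sum.inr false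
    else Sum.inl ⟨x, hx0, hxc⟩)
  · intro x
    by_cases hx0 : x.val % m = 0
    · have hA : (f x).val % m = 0 := by rw [A x hx0, hres0]; exact hx0
      simp only [dif_pos hA, dif_pos hx0]
    · by_cases hxc : x.val % m = c0
      · have hB : (f x).val % m = c0 := by rw [B x hxc, hresc]; exact hxc
        have hB0 : ¬ (f x).val % m = 0 := by rw [hB]; exact hc0
        simp only [dif_neg hB0, dif_pos hB, dif_neg hx0, dif_pos hxc]
      · simp only [D x hx0 hxc]
  · intro x y hxy
    by_cases hx0 : x.val % m = 0 <;> by_cases hy0 : y.val % m = 0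
    · obtain ⟨j, hj⟩ := reach m n 0 f A x y hx0 hy0
      exact ⟨(j : ℤ), by rw [zpow_natCast]; exact hj⟩
    · exfalso
      simp only [dif_pos hx0, dif_neg hy0] at hxy
      by_cases hyc : y.val % m = c0
      · simp only [dif_pos hyc] at hxy
        exact absurd hxy (by simp)
      · simp only [dif_neg hyc] at hxy
        exact absurd hxy (by simp)
    · exfalso
      simp only [dif_neg hx0, dif_pos hy0] at hxy
      by_cases hxc : x.val % m = c0
      · simp only [dif_pos hxc] at hxy
        exact absurd hxy (by simp)
      · simp only [dif_neg hxc] at hxy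
        exact absurd hxy (by simp)
    · simp only [dif_neg hx0, dif_neg hy0] at hxy
      by_cases hxc : x.val % m = c0 <;> by_cases hyc : y.val % m = c0
      · obtain ⟨j, hj⟩ := reach m n c0 f⁻¹ hinv x y hxc hyc
        exact ⟨-(j : ℤ), by rw [zpow_neg, zpow_natCast, ← inv_pow]; exact hj⟩
      · exfalso; simp only [dif_pos hxc, dif_neg hyc] at hxy; exact absurd hxy (by simp)
      · exfalso; simp only [dif_neg hxc, dif_pos hyc] at hxy; exact absurd hxy (by simp)
      · simp only [dif_neg hxc, dif_neg hyc] at hxy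
        have e : x = y := congrArg Subtype.val (Sum.inl.inj hxy)
        rw [e]
  · rintro (⟨y, hy1, hy2⟩ | b)
    · refine ⟨y, ?_⟩
      simp only [dif_neg hy1, dif_neg hy2]
    · cases b
      · refine ⟨((c0 : ℕ) : ZMod (m * n)), ?_⟩
        have hv : ((c0 : ℕ) : ZMod (m * n)).val % m = c0 := by
          rw [ZMod.val_natCast, Nat.mod_mod_of_dvd _ (Dvd.intro n rfl), Nat.mod_eq_of_lt hc0m]
        have hv0 : ¬ ((c0 : ℕ) : ZMod (m * n)).val % m = 0 := by rw [hv]; exact hc0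
        simp only [dif_neg hv0, dif_pos hv]
      · refine ⟨(0 : ZMod (m * n)), ?_⟩
        have hv : (0 : ZMod (m * n)).val % m = 0 := by
          rw [ZMod.val_zero, Nat.zero_mod]
        simp only [dif_pos hv]

lemma card_split {α : Type*} [Fintype α] (p : α → Prop) :
    Nat.card {x // p x} + Nat.card {x // ¬ p x} = Nat.card α := by
  classical
  calc Nat.card {x // p x} + Nat.card {x // ¬ p x}
      = Nat.card ({x // p x} ⊕ {x // ¬ p x}) := (Nat.card_sum).symm
  _ = Nat.card α := Nat.card_congr (Equiv.sumCompl p)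

lemma card_res (m n c : ℕ) [NeZero (m * n)] (hm : 0 < m) (hc : c < m) :
    Nat.card {y : ZMod (m * n) // y.val % m = c} = n := by
  have hlt : ∀ q : Fin n, q.1 * m + c < m * n := by
    intro q
    calc q.1 * m + c < q.1 * m + m := by omega
    _ = (q.1 + 1) * m := by ring
    _ ≤ n * m := Nat.mul_le_mul_right m q.isLt
    _ = m * n := mul_comm n m
  have e : {y : ZMod (m * n) // y.val % m = c} ≃ Fin n := {
    toFun := fun y => ⟨y.1.val / m, Nat.div_lt_of_lt_mul (ZMod.val_lt y.1)⟩
    invFun := fun q => ⟨((q.1 * m + c : ℕ) : ZMod (m * n)), by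
      rw [ZMod.val_cast_of_lt (hlt q)]
      exact (divmod_helper m q.1 c hm hc).2⟩
    left_inv := fun y => by
      obtain ⟨z, hz⟩ := y
      apply Subtype.ext
      show (((z.val / m * m + c : ℕ)) : ZMod (m * n)) = z
      have hnat : z.val / m * m + c = z.val := by
        rw [← hz]
        exact Nat.div_add_mod' z.val m
      rw [hnat]
      exact ZMod.natCast_rightInverse z
    right_inv := fun q => by
      apply Fin.ext
      show (((q.1 * m + c : ℕ) : ZMod (m * n))).val / m = q.1
      rw [ZMod.val_cast_of_lt (hlt q)]
      exact (divmod_helper m q.1 c hm hc).1 }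
  rw [Nat.card_congr e]
  simp

lemma card_one (m n c0 : ℕ) [NeZero (m * n)] (hm : 0 < m) (hc0m : c0 < m) :
    Nat.card {y : ZMod (m * n) // y.val % m ≠ c0} = m * n - n := by
  have h1 : Nat.card {y : ZMod (m * n) // y.val % m = c0}
      + Nat.card {y : ZMod (m * n) // y.val % m ≠ c0} = Nat.card (ZMod (m * n)) :=
    card_split (α := ZMod (m * n)) (fun y => y.val % m = c0)
  rw [card_res m n c0 hm hc0m, Nat.card_zmod] at h1
  omega

lemma card_two (m n c0 : ℕ) [NeZero (m * n)] (hm : 0 < m) (hc0 : c0 ≠ 0) (hc0m : c0 < m)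
    (hn : 0 < n) :
    Nat.card ({y : ZMod (m * n) // y.val % m ≠ 0 ∧ y.val % m ≠ c0} ⊕ Bool)
      = m * n - 2 * n + 2 := by
  classical
  have e1 : {y : ZMod (m * n) // y.val % m ≠ 0 ∧ y.val % m ≠ c0}
      ≃ {y : ZMod (m * n) // ¬ (y.val % m = 0 ∨ y.val % m = c0)} :=
    Equiv.subtypeEquivRight (by tauto)
  have e2 : {y : ZMod (m * n) // y.val % m = 0 ∨ y.val % m = c0}
      ≃ {y : ZMod (m * n) // y.val % m = 0} ⊕ {y : ZMod (m * n) // y.val % m = c0} := {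
    toFun := fun y => if h : y.1.val % m = 0 then Sum.inl ⟨y.1, h⟩
      else Sum.inr ⟨y.1, y.2.resolve_left h⟩
    invFun := Sum.elim (fun z => ⟨z.1, Or.inl z.2⟩) (fun z => ⟨z.1, Or.inr z.2⟩)
    left_inv := fun y => by
      by_cases h : y.1.val % m = 0
      · simp only [dif_pos h]
        rfl
      · simp only [dif_neg h]
        rfl
    right_inv := fun z => by
      rcases z with ⟨z, hz⟩ | ⟨z, hz⟩
      · simp only [Sum.elim_inl, dif_pos hz]
        exact dif_pos hz
      · have : ¬ z.val % m = 0 := by rw [hz]; exact hc0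
        simp only [Sum.elim_inr, dif_neg this]
        exact dif_neg this }
  have h2 : Nat.card {y : ZMod (m * n) // y.val % m = 0 ∨ y.val % m = c0} = 2 * n := by
    rw [Nat.card_congr e2, Nat.card_sum, card_res m n 0 hm (by omega),
      card_res m n c0 hm hc0m]
    omega
  have h3 : Nat.card {y : ZMod (m * n) // y.val % m = 0 ∨ y.val % m = c0}
      + Nat.card {y : ZMod (m * n) // ¬ (y.val % m = 0 ∨ y.val % m = c0)}
      = Nat.card (ZMod (m * n)) :=
    card_split (α := ZMod (m * n)) (fun y => y.val % m = 0 ∨ y.val % m = c0)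
  rw [h2, Nat.card_zmod] at h3
  rw [Nat.card_sum, Nat.card_congr e1]
  have hb : Nat.card Bool = 2 := by simp
  rw [hb]
  have hmn : 2 * n ≤ m * n := by
    have := Nat.mul_le_mul_right n (show 2 ≤ m by omega)
    omega
  omega

/-- The Cayley distances: `d(g_A,e) = d(g_B,e) = n(m-1)`, `d(g_A,g_B) = 2(n-1)`,
`d(X,e) = n(m-2)` and `d(X,g_A) = d(X,g_B) = n`. -/
theorem stmt13 (n m : ℕ) (hn : 1 ≤ n) (hm : 2 ≤ m) (hme : Even m)
    (gB gA X : Equiv.Perm (ZMod (m * n)))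
(hgB : ∀ q r : ℕ, r < m →
      gB ((q * m + r : ℕ) : ZMod (m * n)) = ((q * m + (r + 1) % m : ℕ) : ZMod (m * n)))
    (hgA : gA = Equiv.addLeft ((m / 2 : ℕ) : ZMod (m * n)) * gB *
      (Equiv.addLeft ((m / 2 : ℕ) : ZMod (m * n)))⁻¹)
(hX : ∀ q r : ℕ, r < m / 2 →
      X ((q * (m / 2) + r : ℕ) : ZMod (m * n)) =
        ((q * (m / 2) + (r + 1) % (m / 2) : ℕ) : ZMod (m * n)))
    :
    cayley gA 1 = n * (m - 1) ∧ cayley gB 1 = n * (m - 1) ∧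
    cayley gA gB = 2 * (n - 1) ∧ cayley X 1 = n * (m - 2) ∧
    cayley X gA = n ∧ cayley X gB = n := by
  haveI : NeZero (m * n) := ⟨Nat.mul_ne_zero (by omega) (by omega)⟩
  set c0 := m / 2 with hc0def
  have hm2 : m = 2 * c0 := by
    obtain ⟨t, ht⟩ := hme
    omega
  have hc01 : 1 ≤ c0 := by omega
  have hc0m : c0 < m := by omega
  have hc00 : c0 ≠ 0 := by omega
  -- counts of the three basic permutations
  have cgB : cycleCount gB = n :=
    cycleCount_blocks (m * n) m n rfl (by omega) (by omega) gB hgB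
  have cX : cycleCount X = 2 * n :=
    cycleCount_blocks (m * n) c0 (2 * n) (by rw [hm2]; ring) (by omega) (by omega) X hX
  have cgA : cycleCount gA = n := by
    rw [hgA, cycleCount_conj]
    exact cgB
  have hm0 : 0 < m := by omega
  have hc0pos : 0 < c0 := hc01
  have hmlemn : m ≤ m * n := Nat.le_mul_of_pos_right m (by omega)
  have hxx : ∀ x : ZMod (m * n), ((x.val : ℕ) : ZMod (m * n)) = x :=
    fun x => ZMod.natCast_rightInverse x
  have hbr : ∀ q : ℕ, q * m = 2 * q * c0 := by
    intro q; rw [hm2]; ring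
  have hgBc : ∀ a : ℕ, gB ((a : ℕ) : ZMod (m * n))
      = ((a / m * m + (a % m + 1) % m : ℕ) : ZMod (m * n)) := by
    intro a
    have h := hgB (a / m) (a % m) (Nat.mod_lt _ hm0)
    rwa [Nat.div_add_mod'] at h
  have hXc : ∀ a : ℕ, X ((a : ℕ) : ZMod (m * n))
      = ((a / c0 * c0 + (a % c0 + 1) % c0 : ℕ) : ZMod (m * n)) := by
    intro a
    have h := hX (a / c0) (a % c0) (Nat.mod_lt _ hc0pos)
    rwa [Nat.div_add_mod'] at h
  have hgBinvc : ∀ a : ℕ, gB⁻¹ ((a : ℕ) : ZMod (m * n))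
      = ((a / m * m + (a % m + (m - 1)) % m : ℕ) : ZMod (m * n)) := by
    intro a
    have key : gB (((a / m * m + (a % m + (m - 1)) % m : ℕ) : ZMod (m * n)))
        = ((a : ℕ) : ZMod (m * n)) := by
      rw [hgBc]
      have h1 := divmod_helper m (a / m) ((a % m + (m - 1)) % m) hm0 (Nat.mod_lt _ hm0)
      rw [h1.1, h1.2]
      have h2 : ((a % m + (m - 1)) % m + 1) % m = a % m := by
        rw [Nat.mod_add_mod]
        have e : a % m + (m - 1) + 1 = a % m + m := by omega
        rw [e, Nat.add_mod_right, Nat.mod_mod_of_dvd _ (dvd_refl m)]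
      rw [h2, Nat.div_add_mod']
    calc gB⁻¹ ((a : ℕ) : ZMod (m * n))
        = gB⁻¹ (gB (((a / m * m + (a % m + (m - 1)) % m : ℕ) : ZMod (m * n)))) := by rw [key]
    _ = _ := Equiv.symm_apply_apply gB _
  have hP2m : ∀ a : ℕ, (X * gB⁻¹) ((a : ℕ) : ZMod (m * n))
      = (((a / m * m + (a % m + (m - 1)) % m) / c0 * c0
          + ((a / m * m + (a % m + (m - 1)) % m) % c0 + 1) % c0 : ℕ) : ZMod (m * n)) := by
    intro a
    rw [Equiv.Perm.mul_apply, hgBinvc, hXc]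
  have P2V0 : ∀ a : ℕ, a % m = 0 →
      (X * gB⁻¹) ((a : ℕ) : ZMod (m * n)) = ((a + c0 : ℕ) : ZMod (m * n)) := by
    intro a hs
    rw [hP2m a]
    have e0 : (a % m + (m - 1)) % m = m - 1 := by
      rw [hs, Nat.zero_add, Nat.mod_eq_of_lt (by omega)]
    rw [e0]
    have h1 := hbr (a / m)
    have h2 : (2 * (a / m) + 1) * c0 = 2 * (a / m) * c0 + c0 := by ring
    have hB : a / m * m + (m - 1) = (2 * (a / m) + 1) * c0 + (c0 - 1) := by omega
    rw [hB]
    have h3 := divmod_helper c0 (2 * (a / m) + 1) (c0 - 1) hc0pos (by omega)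
    rw [h3.1, h3.2]
    have e1 : (c0 - 1 + 1) % c0 = 0 := by
      rw [show c0 - 1 + 1 = c0 by omega, Nat.mod_self]
    rw [e1, Nat.add_zero]
    congr 1
    have h4 := Nat.div_add_mod' a m
    omega
  have P2Vc : ∀ a : ℕ, a % m = c0 →
      (X * gB⁻¹) ((a : ℕ) : ZMod (m * n)) = ((a - c0 : ℕ) : ZMod (m * n)) := by
    intro a hs
    rw [hP2m a]
    have e0 : (a % m + (m - 1)) % m = c0 - 1 := by
      rw [show a % m + (m - 1) = m + (c0 - 1) by omega, Nat.add_mod_left,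
        Nat.mod_eq_of_lt (by omega)]
    rw [e0]
    have h1 := hbr (a / m)
    have hB : a / m * m + (c0 - 1) = 2 * (a / m) * c0 + (c0 - 1) := by omega
    rw [hB]
    have h3 := divmod_helper c0 (2 * (a / m)) (c0 - 1) hc0pos (by omega)
    rw [h3.1, h3.2]
    have e1 : (c0 - 1 + 1) % c0 = 0 := by
      rw [show c0 - 1 + 1 = c0 by omega, Nat.mod_self]
    rw [e1, Nat.add_zero]
    congr 1
    have h4 := Nat.div_add_mod' a m
    omega
  have P2Velse : ∀ a : ℕ, a % m ≠ 0 → a % m ≠ c0 →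
      (X * gB⁻¹) ((a : ℕ) : ZMod (m * n)) = ((a : ℕ) : ZMod (m * n)) := by
    intro a hs0 hsc
    have hslt : a % m < m := Nat.mod_lt _ hm0
    rw [hP2m a]
    have e0 : (a % m + (m - 1)) % m = a % m - 1 := by
      rw [show a % m + (m - 1) = m + (a % m - 1) by omega, Nat.add_mod_left,
        Nat.mod_eq_of_lt (by omega)]
    rw [e0]
    have h1 := hbr (a / m)
    have h4 := Nat.div_add_mod' a m
    by_cases hlt : a % m < c0
    · have hB : a / m * m + (a % m - 1) = 2 * (a / m) * c0 + (a % m - 1) := by omega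
      rw [hB]
      have h3 := divmod_helper c0 (2 * (a / m)) (a % m - 1) hc0pos (by omega)
      rw [h3.1, h3.2]
      have e1 : (a % m - 1 + 1) % c0 = a % m := by
        rw [show a % m - 1 + 1 = a % m by omega, Nat.mod_eq_of_lt hlt]
      rw [e1]
      congr 1
      omega
    · have h2 : (2 * (a / m) + 1) * c0 = 2 * (a / m) * c0 + c0 := by ring
      have hB : a / m * m + (a % m - 1) = (2 * (a / m) + 1) * c0 + (a % m - 1 - c0) := by omega
      rw [hB]
      have h3 := divmod_helper c0 (2 * (a / m) + 1) (a % m - 1 - c0) hc0pos (by omega)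
      rw [h3.1, h3.2]
      have e1 : (a % m - 1 - c0 + 1) % c0 = a % m - c0 := by
        rw [show a % m - 1 - c0 + 1 = a % m - c0 by omega, Nat.mod_eq_of_lt (by omega)]
      rw [e1]
      congr 1
      omega
  have hresid : ∀ v : ℕ, v % m = 0 → (v + c0) % m = c0 := by
    intro v hv
    rw [Nat.add_mod, hv, Nat.zero_add, Nat.mod_mod_of_dvd _ (dvd_refl m),
      Nat.mod_eq_of_lt hc0m]
  have A2 : ∀ x : ZMod (m * n), x.val % m = 0 → ((X * gB⁻¹) x).val % m = c0 := by
    intro x hx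
    have hv := P2V0 x.val hx
    rw [hxx x] at hv
    rw [hv, ZMod.val_natCast, Nat.mod_mod_of_dvd _ (Dvd.intro n rfl)]
    exact hresid x.val hx
  have B2 : ∀ x : ZMod (m * n), x.val % m = c0 → ((X * gB⁻¹) x).val % m = 0 := by
    intro x hx
    have hv := P2Vc x.val hx
    rw [hxx x] at hv
    rw [hv, ZMod.val_natCast, Nat.mod_mod_of_dvd _ (Dvd.intro n rfl)]
    have h4 := Nat.div_add_mod' x.val m
    have e : x.val - c0 = x.val / m * m := by omega
    rw [e, Nat.mul_mod_left]
  have C2 : ∀ x : ZMod (m * n), x.val % m = 0 →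
      (X * gB⁻¹) ((X * gB⁻¹) x) = x := by
    intro x hx
    have hv := P2V0 x.val hx
    rw [hxx x] at hv
    have hv2 := P2Vc (x.val + c0) (hresid x.val hx)
    rw [hv, hv2, Nat.add_sub_cancel, hxx]
  have D2 : ∀ x : ZMod (m * n), x.val % m ≠ 0 → x.val % m ≠ c0 →
      (X * gB⁻¹) x = x := by
    intro x h1 h2
    have hv := P2Velse x.val h1 h2
    rwa [hxx x] at hv
  -- count of gA * gB⁻¹
  have cP1 : cycleCount (gA * gB⁻¹) = m * n - 2 * n + 2 := by
    have htinv : ∀ b : ℕ,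
        (Equiv.addLeft ((c0 : ℕ) : ZMod (m * n)))⁻¹ ((b : ℕ) : ZMod (m * n))
        = ((b + (m * n - c0) : ℕ) : ZMod (m * n)) := by
      intro b
      have key : Equiv.addLeft ((c0 : ℕ) : ZMod (m * n))
          (((b + (m * n - c0) : ℕ)) : ZMod (m * n)) = ((b : ℕ) : ZMod (m * n)) := by
        simp only [Equiv.coe_addLeft]
        have e : ((c0 + (b + (m * n - c0)) : ℕ) : ZMod (m * n))
            = ((b + m * n : ℕ) : ZMod (m * n)) := by
          congr 1
          omega
        calc ((c0 : ℕ) : ZMod (m * n)) + (((b + (m * n - c0) : ℕ)) : ZMod (m * n))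
            = ((c0 + (b + (m * n - c0)) : ℕ) : ZMod (m * n)) := by push_cast; ring
        _ = ((b + m * n : ℕ) : ZMod (m * n)) := e
        _ = ((b : ℕ) : ZMod (m * n)) := by rw [Nat.cast_add, ZMod.natCast_self, add_zero]
      calc (Equiv.addLeft ((c0 : ℕ) : ZMod (m * n)))⁻¹ ((b : ℕ) : ZMod (m * n))
          = (Equiv.addLeft ((c0 : ℕ) : ZMod (m * n)))⁻¹
            (Equiv.addLeft ((c0 : ℕ) : ZMod (m * n))
              (((b + (m * n - c0) : ℕ)) : ZMod (m * n))) := by rw [key]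
      _ = _ := Equiv.symm_apply_apply _ _
    have hP1m : ∀ a : ℕ, (gA * gB⁻¹) ((a : ℕ) : ZMod (m * n))
        = ((c0 : ℕ) : ZMod (m * n))
          + gB (((a / m * m + (a % m + (m - 1)) % m + (m * n - c0) : ℕ)) : ZMod (m * n)) := by
      intro a
      rw [Equiv.Perm.mul_apply, hgBinvc, hgA]
      simp only [Equiv.Perm.mul_apply, Equiv.coe_addLeft]
      rw [htinv]
    have P1V0 : ∀ a : ℕ, a % m = 0 → (gA * gB⁻¹) ((a : ℕ) : ZMod (m * n))
        = ((a : ℕ) : ZMod (m * n)) + ((m : ℕ) : ZMod (m * n)) := by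
      intro a hs
      rw [hP1m a]
      have e0 : (a % m + (m - 1)) % m = m - 1 := by
        rw [hs, Nat.zero_add, Nat.mod_eq_of_lt (by omega)]
      rw [e0]
      have h2 : (a / m + n) * m = a / m * m + n * m := by ring
      have h3 : n * m = m * n := by ring
      have hB : a / m * m + (m - 1) + (m * n - c0) = (a / m + n) * m + (c0 - 1) := by omega
      rw [hB, hgB (a / m + n) (c0 - 1) (by omega)]
      have e1 : (c0 - 1 + 1) % m = c0 := by
        rw [show c0 - 1 + 1 = c0 by omega, Nat.mod_eq_of_lt hc0m]
      rw [e1]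
      have h4 := Nat.div_add_mod' a m
      have key : c0 + ((a / m + n) * m + c0) = a + m + m * n := by omega
      calc ((c0 : ℕ) : ZMod (m * n)) + (((a / m + n) * m + c0 : ℕ) : ZMod (m * n))
          = ((c0 + ((a / m + n) * m + c0) : ℕ) : ZMod (m * n)) := by push_cast; ring
      _ = ((a + m + m * n : ℕ) : ZMod (m * n)) := by rw [key]
      _ = ((a : ℕ) : ZMod (m * n)) + ((m : ℕ) : ZMod (m * n)) := by
          rw [Nat.cast_add, ZMod.natCast_self, add_zero, Nat.cast_add]
    have P1Vc : ∀ a : ℕ, a % m = c0 → (gA * gB⁻¹) ((a : ℕ) : ZMod (m * n))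
        = ((a : ℕ) : ZMod (m * n)) + ((m * n - m : ℕ) : ZMod (m * n)) := by
      intro a hs
      rw [hP1m a]
      have e0 : (a % m + (m - 1)) % m = c0 - 1 := by
        rw [show a % m + (m - 1) = m + (c0 - 1) by omega, Nat.add_mod_left,
          Nat.mod_eq_of_lt (by omega)]
      rw [e0]
      have h5 : (n - 1) * m + m = n * m := by
        calc (n - 1) * m + m = ((n - 1) + 1) * m := by ring
        _ = n * m := by rw [show n - 1 + 1 = n by omega]
      have h6 : (a / m + (n - 1)) * m = a / m * m + (n - 1) * m := by ring
      have h3 : n * m = m * n := by ring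
      have hB : a / m * m + (c0 - 1) + (m * n - c0) = (a / m + (n - 1)) * m + (m - 1) := by
        omega
      rw [hB, hgB (a / m + (n - 1)) (m - 1) (by omega)]
      have e1 : (m - 1 + 1) % m = 0 := by
        rw [show m - 1 + 1 = m by omega, Nat.mod_self]
      rw [e1, Nat.add_zero]
      have h4 := Nat.div_add_mod' a m
      have key : c0 + (a / m + (n - 1)) * m = a + (m * n - m) := by omega
      calc ((c0 : ℕ) : ZMod (m * n)) + (((a / m + (n - 1)) * m : ℕ) : ZMod (m * n))
          = ((c0 + (a / m + (n - 1)) * m : ℕ) : ZMod (m * n)) := by push_cast; ring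
      _ = ((a + (m * n - m) : ℕ) : ZMod (m * n)) := by rw [key]
      _ = ((a : ℕ) : ZMod (m * n)) + ((m * n - m : ℕ) : ZMod (m * n)) := by
          push_cast; ring
    have P1Velse : ∀ a : ℕ, a % m ≠ 0 → a % m ≠ c0 →
        (gA * gB⁻¹) ((a : ℕ) : ZMod (m * n)) = ((a : ℕ) : ZMod (m * n)) := by
      intro a hs0 hsc
      have hslt : a % m < m := Nat.mod_lt _ hm0
      rw [hP1m a]
      have e0 : (a % m + (m - 1)) % m = a % m - 1 := by
        rw [show a % m + (m - 1) = m + (a % m - 1) by omega, Nat.add_mod_left,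
          Nat.mod_eq_of_lt (by omega)]
      rw [e0]
      have h4 := Nat.div_add_mod' a m
      have h3 : n * m = m * n := by ring
      by_cases hlt : a % m < c0
      · have h5 : (n - 1) * m + m = n * m := by
          calc (n - 1) * m + m = ((n - 1) + 1) * m := by ring
          _ = n * m := by rw [show n - 1 + 1 = n by omega]
        have h6 : (a / m + (n - 1)) * m = a / m * m + (n - 1) * m := by ring
        have hB : a / m * m + (a % m - 1) + (m * n - c0)
            = (a / m + (n - 1)) * m + (c0 + a % m - 1) := by omega
        rw [hB, hgB (a / m + (n - 1)) (c0 + a % m - 1) (by omega)]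
        have e1 : (c0 + a % m - 1 + 1) % m = c0 + a % m := by
          rw [show c0 + a % m - 1 + 1 = c0 + a % m by omega, Nat.mod_eq_of_lt (by omega)]
        rw [e1]
        have key : c0 + ((a / m + (n - 1)) * m + (c0 + a % m)) = a + m * n := by omega
        calc ((c0 : ℕ) : ZMod (m * n))
            + (((a / m + (n - 1)) * m + (c0 + a % m) : ℕ) : ZMod (m * n))
            = ((c0 + ((a / m + (n - 1)) * m + (c0 + a % m)) : ℕ) : ZMod (m * n)) := by
              push_cast; ring
        _ = ((a + m * n : ℕ) : ZMod (m * n)) := by rw [key]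
        _ = ((a : ℕ) : ZMod (m * n)) := by rw [Nat.cast_add, ZMod.natCast_self, add_zero]
      · have h2 : (a / m + n) * m = a / m * m + n * m := by ring
        have hB : a / m * m + (a % m - 1) + (m * n - c0)
            = (a / m + n) * m + (a % m - 1 - c0) := by omega
        rw [hB, hgB (a / m + n) (a % m - 1 - c0) (by omega)]
        have e1 : (a % m - 1 - c0 + 1) % m = a % m - c0 := by
          rw [show a % m - 1 - c0 + 1 = a % m - c0 by omega, Nat.mod_eq_of_lt (by omega)]
        rw [e1]
        have key : c0 + ((a / m + n) * m + (a % m - c0)) = a + m * n := by omega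
        calc ((c0 : ℕ) : ZMod (m * n))
            + (((a / m + n) * m + (a % m - c0) : ℕ) : ZMod (m * n))
            = ((c0 + ((a / m + n) * m + (a % m - c0)) : ℕ) : ZMod (m * n)) := by
              push_cast; ring
        _ = ((a + m * n : ℕ) : ZMod (m * n)) := by rw [key]
        _ = ((a : ℕ) : ZMod (m * n)) := by rw [Nat.cast_add, ZMod.natCast_self, add_zero]
    have A1 : ∀ x : ZMod (m * n), x.val % m = 0 →
        (gA * gB⁻¹) x = x + ((m : ℕ) : ZMod (m * n)) := by
      intro x hx
      have hv := P1V0 x.val hx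
      rwa [hxx x] at hv
    have B1 : ∀ x : ZMod (m * n), x.val % m = c0 →
        (gA * gB⁻¹) x = x + ((m * n - m : ℕ) : ZMod (m * n)) := by
      intro x hx
      have hv := P1Vc x.val hx
      rwa [hxx x] at hv
    have D1 : ∀ x : ZMod (m * n), x.val % m ≠ 0 → x.val % m ≠ c0 →
        (gA * gB⁻¹) x = x := by
      intro x h1 h2
      have hv := P1Velse x.val h1 h2
      rwa [hxx x] at hv
    rw [cycleCount_twocycles m n c0 hc00 hc0m (by omega) (gA * gB⁻¹) A1 B1 D1]
    exact card_two m n c0 hm0 hc00 hc0m (by omega)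
  -- count of X * gB⁻¹
  have cP2 : cycleCount (X * gB⁻¹) = m * n - n := by
    rw [cycleCount_pairs m n c0 hc00 (X * gB⁻¹) A2 B2 C2 D2]
    exact card_one m n c0 hm0 hc0m
  -- count of X * gA⁻¹
  have cP3 : cycleCount (X * gA⁻¹) = m * n - n := by
    have hgAinv : gA⁻¹ = Equiv.addLeft ((c0 : ℕ) : ZMod (m * n)) * gB⁻¹ *
        (Equiv.addLeft ((c0 : ℕ) : ZMod (m * n)))⁻¹ := by
      rw [hgA]
      group
    have hcomm : X * Equiv.addLeft ((c0 : ℕ) : ZMod (m * n))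
        = Equiv.addLeft ((c0 : ℕ) : ZMod (m * n)) * X := by
      apply Equiv.ext
      intro x
      simp only [Equiv.Perm.mul_apply, Equiv.coe_addLeft]
      rw [← hxx x]
      have hc : ((c0 : ℕ) : ZMod (m * n)) + ((x.val : ℕ) : ZMod (m * n))
          = ((c0 + x.val : ℕ) : ZMod (m * n)) := by push_cast; ring
      rw [hc, hXc (c0 + x.val), hXc x.val]
      have hd : (c0 + x.val) / c0 = x.val / c0 + 1 := by
        rw [Nat.add_comm, Nat.add_div_right _ hc0pos]
      have he : (c0 + x.val) % c0 = x.val % c0 := by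
        rw [Nat.add_comm, Nat.add_mod_right]
      rw [hd, he]
      have hc2 : ((c0 : ℕ) : ZMod (m * n))
          + ((x.val / c0 * c0 + (x.val % c0 + 1) % c0 : ℕ) : ZMod (m * n))
          = ((c0 + (x.val / c0 * c0 + (x.val % c0 + 1) % c0) : ℕ) : ZMod (m * n)) := by
        push_cast; ring
      rw [hc2]
      congr 1
      have h2 : (x.val / c0 + 1) * c0 = x.val / c0 * c0 + c0 := by ring
      omega
    have hP3 : X * gA⁻¹ = Equiv.addLeft ((c0 : ℕ) : ZMod (m * n)) * (X * gB⁻¹) *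
        (Equiv.addLeft ((c0 : ℕ) : ZMod (m * n)))⁻¹ := by
      rw [hgAinv, ← mul_assoc, ← mul_assoc, hcomm, mul_assoc
        (Equiv.addLeft ((c0 : ℕ) : ZMod (m * n))) X gB⁻¹]
    rw [hP3, cycleCount_conj, cycleCount_pairs m n c0 hc00 (X * gB⁻¹) A2 B2 C2 D2]
    exact card_one m n c0 hm0 hc0m
  have hmn2 : 2 * n ≤ m * n := Nat.mul_le_mul_right n hm
  have hmn1 : n ≤ m * n := by omega
  have e1 : n * (m - 1) = m * n - n := by
    rw [Nat.mul_sub, mul_one, mul_comm]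
  have e2 : n * (m - 2) = m * n - 2 * n := by
    rw [Nat.mul_sub, mul_comm]
    omega
  refine ⟨?_, ?_, ?_, ?_, ?_, ?_⟩
  · show Nat.card (ZMod (m * n)) - cycleCount (gA * 1⁻¹) = n * (m - 1)
    rw [inv_one, mul_one, cgA, Nat.card_zmod, e1]
  · show Nat.card (ZMod (m * n)) - cycleCount (gB * 1⁻¹) = n * (m - 1)
    rw [inv_one, mul_one, cgB, Nat.card_zmod, e1]
  · show Nat.card (ZMod (m * n)) - cycleCount (gA * gB⁻¹) = 2 * (n - 1)
    rw [cP1, Nat.card_zmod]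
    omega
  · show Nat.card (ZMod (m * n)) - cycleCount (X * 1⁻¹) = n * (m - 2)
    rw [inv_one, mul_one, cX, Nat.card_zmod, e2]
  · show Nat.card (ZMod (m * n)) - cycleCount (X * gA⁻¹) = n
    rw [cP3, Nat.card_zmod]
    omega
  · show Nat.card (ZMod (m * n)) - cycleCount (X * gB⁻¹) = n
    rw [cP2, Nat.card_zmod]
    omega
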